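/- Let f : X → [0,∞) be Lipschitz, let τ > 0, and let g : X → [τ,∞) be a bounded lower semicontinuous function with countable range, g ∈ L¹_loc(X), which is an upper gradient of f. Then there exist Lipschitz functions f_k : X → ℝ with f_k → f in L¹_loc(X) and bounded Lipschitz functions g_k : X → [τ,∞) such that each g_k is an upper gradient of f_k, g_k ≤ g_{k+1} ≤ g pointwise, g_k → g pointwise everywhere on X (monotonically increasing), and g_k → g in L¹_loc(X). -/

import Mathlib

open MeasureTheory Metric Filter Set Topology
open scoped NNReal ENNReal

noncomputable section

universe u

/-- The measure `μ` is doubling with constant `Cd`: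
`0 < μ(B(x,2r)) ≤ Cd·μ(B(x,r)) < ∞` for every `x` and every `r > 0`. -/
def IsDoublingWith {X : Type u} [PseudoMetricSpace X] [MeasurableSpace X]
    (μ : Measure X) (Cd : ℝ≥0) : Prop :=
  ∀ (x : X) (r : ℝ), 0 < r →
    0 < μ (ball x (2 * r)) ∧
      μ (ball x (2 * r)) ≤ (Cd : ℝ≥0∞) * μ (ball x r) ∧
      (Cd : ℝ≥0∞) * μ (ball x r) < ⊤

/-- `X` is a geodesic space: any two points are joined by a unit-speed geodesic. -/
def IsGeodesic (X : Type u) [PseudoMetricSpace X] : Prop :=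
  ∀ x y : X, ∃ γ : ℝ → X,
    LipschitzOnWith 1 γ (Icc 0 (dist x y)) ∧ γ 0 = x ∧ γ (dist x y) = y

/-- `g` is an upper gradient of `u`: for every `L ≥ 0` and every `1`-Lipschitz curve
`γ : [0,L] → X`, `|u(γ 0) − u(γ L)| ≤ ∫₀^L g(γ t) dt`. -/
def IsUpperGradientOf {X : Type u} [PseudoMetricSpace X] (g u : X → ℝ) : Prop :=
  ∀ L : ℝ, 0 ≤ L → ∀ γ : ℝ → X, LipschitzOnWith 1 γ (Icc 0 L) →
    |u (γ 0) - u (γ L)| ≤ ∫ t in (0:ℝ)..L, g (γ t)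

/-- The lower pointwise Lipschitz constant
`lip u (x) = liminf_{r→0} r⁻¹ sup_{y ∈ B(x,r)} |u y − u x|`. -/
def lipConst {X : Type u} [PseudoMetricSpace X] (u : X → ℝ) (x : X) : ℝ≥0∞ :=
  Filter.liminf
    (fun r : ℝ => ⨆ y ∈ ball x r, ENNReal.ofReal (|u y - u x| / r)) (𝓝[>] (0:ℝ))

/-- `u` is locally Lipschitz on `W`: Lipschitz on every closed bounded subset of `W`. -/
def LocallyLipschitzOnSet {X : Type u} [PseudoMetricSpace X] (u : X → ℝ) (W : Set X) : Prop :=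
  ∀ K : Set X, IsClosed K → Bornology.IsBounded K → K ⊆ W →
    ∃ L : ℝ≥0, LipschitzOnWith L u K

/-- `u i → f` in `L¹_loc(W)`. -/
def TendstoL1loc {X : Type u} [PseudoMetricSpace X] [MeasurableSpace X]
    (μ : Measure X) (u : ℕ → X → ℝ) (f : X → ℝ) (W : Set X) : Prop :=
  ∀ K : Set X, IsClosed K → Bornology.IsBounded K → K ⊆ W →
    Tendsto (fun i => ∫⁻ x in K, ENNReal.ofReal |u i x - f x| ∂μ) atTop (𝓝 0)

/-- Total variation `V(f,W)` of `f` on an open set `W`: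
the infimum over sequences of locally Lipschitz functions converging to `f` in `L¹_loc(W)`
of the liminf of `∫_W lip u_i dμ`. -/
def totVarOn {X : Type u} [PseudoMetricSpace X] [MeasurableSpace X]
    (μ : Measure X) (f : X → ℝ) (W : Set X) : ℝ≥0∞ :=
  ⨅ (us : ℕ → X → ℝ) (_ : ∀ i, LocallyLipschitzOnSet (us i) W)
    (_ : TendstoL1loc μ us f W),
    Filter.liminf (fun i => ∫⁻ x in W, lipConst (us i) x ∂μ) atTop

/-- Total variation `V(f,A)` of `f` on an arbitrary set `A`:
infimum of `V(f,W)` over open `W ⊇ A`. -/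
def totVarSet {X : Type u} [PseudoMetricSpace X] [MeasurableSpace X]
    (μ : Measure X) (f : X → ℝ) (A : Set X) : ℝ≥0∞ :=
  ⨅ (W : Set X) (_ : IsOpen W) (_ : A ⊆ W), totVarOn μ f W

/-- `f` is of bounded variation: locally integrable and `V(f,X) < ∞`. -/
def IsBV {X : Type u} [MetricSpace X] [MeasurableSpace X]
    (μ : Measure X) (f : X → ℝ) : Prop :=
  LocallyIntegrable f μ ∧ totVarOn μ f Set.univ < ⊤

/-- `(X,d,μ)` supports a `1`-Poincaré inequality with constant `CP`. -/
def SupportsPoincare {X : Type u} [MetricSpace X] [MeasurableSpace X]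
    (μ : Measure X) (CP : ℝ) : Prop :=
  ∀ u : X → ℝ, LocallyLipschitzOnSet u Set.univ →
    ∀ g : X → ℝ, (∀ x, 0 ≤ g x) → Measurable g → IsUpperGradientOf g u →
      ∀ (x : X) (r : ℝ), 0 < r →
        (⨍ y in ball x r, |u y - (⨍ z in ball x r, u z ∂μ)| ∂μ) ≤
          CP * r * (⨍ y in ball x r, g y ∂μ)

/-- Standing assumptions: a complete geodesic metric measure space with at least two
points, whose measure is doubling and supports a 1-Poincaré inequality. -/
def GoodSpace (X : Type u) [MetricSpace X] [MeasurableSpace X]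
    (μ : Measure X) (Cd : ℝ≥0) (CP : ℝ) : Prop :=
  Nontrivial X ∧ CompleteSpace X ∧ IsGeodesic X ∧
    IsDoublingWith μ Cd ∧ SupportsPoincare μ CP

/-- The codimension-1 Hausdorff measure
`𝓗(A) = sup_{δ>0} inf { Σ μ(B_i)/r_i : 0 < r_i ≤ δ, A ⊆ ⋃ B_i }`,
the infimum over countable coverings of `A` by balls (balls of nonpositive radius
are empty and contribute `0`). -/
def codimOneH {X : Type u} [PseudoMetricSpace X] [MeasurableSpace X]
    (μ : Measure X) (A : Set X) : ℝ≥0∞ :=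
  ⨆ (δ : ℝ) (_ : 0 < δ),
    ⨅ (c : ℕ → X) (r : ℕ → ℝ) (_ : ∀ i, r i ≤ δ)
      (_ : A ⊆ ⋃ i, ball (c i) (r i)),
      ∑' i, if 0 < r i then μ (ball (c i) (r i)) / ENNReal.ofReal (r i) else 0

/-- The measure theoretic boundary `∂*E`. -/
def measBdry {X : Type u} [PseudoMetricSpace X] [MeasurableSpace X]
    (μ : Measure X) (E : Set X) : Set X :=
  {x : X |
    0 < Filter.limsup (fun r : ℝ => μ (E ∩ ball x r) / μ (ball x r)) (𝓝[>] (0:ℝ)) ∧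
    0 < Filter.limsup (fun r : ℝ => μ (Eᶜ ∩ ball x r) / μ (ball x r)) (𝓝[>] (0:ℝ))}

/-- `A` has density `0` at `x`. -/
def DensityZeroAt {X : Type u} [PseudoMetricSpace X] [MeasurableSpace X]
    (μ : Measure X) (A : Set X) (x : X) : Prop :=
  Tendsto (fun r : ℝ => μ (A ∩ ball x r) / μ (ball x r)) (𝓝[>] (0:ℝ)) (𝓝 0)

/-- `A` has density `1` at `x`. -/
def DensityOneAt {X : Type u} [PseudoMetricSpace X] [MeasurableSpace X]
    (μ : Measure X) (A : Set X) (x : X) : Prop :=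
  Tendsto (fun r : ℝ => μ (A ∩ ball x r) / μ (ball x r)) (𝓝[>] (0:ℝ)) (𝓝 1)

/-- `x` is a Lebesgue point of `u`. -/
def LebesguePointOf {X : Type u} [MetricSpace X] [MeasurableSpace X]
    (μ : Measure X) (u : X → ℝ) (x : X) : Prop :=
  Tendsto (fun r : ℝ => ⨍ y in ball x r, |u y - u x| ∂μ) (𝓝[>] (0:ℝ)) (𝓝 0)

/-- `u` is a Borel representative whose value at each Lebesgue point equals the limit
of its ball averages. -/
def PreciseRep {X : Type u} [MetricSpace X] [MeasurableSpace X]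
    (μ : Measure X) (u : X → ℝ) : Prop :=
  Measurable u ∧ ∀ (x : X) (c : ℝ),
    Tendsto (fun r : ℝ => ⨍ y in ball x r, u y ∂μ) (𝓝[>] (0:ℝ)) (𝓝 c) → u x = c

/-- The restricted maximal function `M_R ν (x) = sup_{0<r≤R} ν(B(x,r))/μ(B(x,r))`. -/
def restrMaximal {X : Type u} [PseudoMetricSpace X] [MeasurableSpace X]
    (μ ν : Measure X) (R : ℝ) (x : X) : ℝ≥0∞ :=
  ⨆ (r : ℝ) (_ : 0 < r) (_ : r ≤ R), ν (ball x r) / μ (ball x r)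

/-- `F_g(x,y)`: the infimum of `∫_γ g ds` over 1-Lipschitz curves `γ : [0,L] → Z`
joining `x` to `y` (the infimum over the empty set is `∞`). -/
def curveInf {Z : Type u} [PseudoMetricSpace Z] (g : Z → ℝ) (x y : Z) : ℝ≥0∞ :=
  ⨅ (L : ℝ) (_ : 0 ≤ L) (γ : ℝ → Z) (_ : LipschitzOnWith 1 γ (Icc 0 L))
    (_ : γ 0 = x) (_ : γ L = y),
    ∫⁻ t in Icc (0:ℝ) L, ENNReal.ofReal (g (γ t))

/-- Weak-star convergence of measures: test against continuous, compactly
supported functions. -/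
def WeakStar {Z : Type u} [MetricSpace Z] [MeasurableSpace Z]
    (ν : ℕ → Measure Z) (m : Measure Z) : Prop :=
  ∀ φ : Z → ℝ, Continuous φ → HasCompactSupport φ →
    Tendsto (fun n => ∫ x, φ x ∂(ν n)) atTop (𝓝 (∫ x, φ x ∂m))

/-- `φ ∈ BV_c(U)`: a BV function whose support is compact and contained in `U`. -/
def MemBVc {X : Type u} [MetricSpace X] [MeasurableSpace X]
    (μ : Measure X) (φ : X → ℝ) (U : Set X) : Prop :=
  IsBV μ φ ∧ IsCompact (tsupport φ) ∧ tsupport φ ⊆ U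




set_option linter.unusedSectionVars false
set_option maxHeartbeats 1000000
section Aux
open intervalIntegral

lemma IsDoublingWith.pos {X : Type u} [PseudoMetricSpace X] [MeasurableSpace X]
    {μ : Measure X} {Cd : ℝ≥0} (h : IsDoublingWith μ Cd) (x : X) {r : ℝ} (hr : 0 < r) :
    0 < μ (ball x r) := by
  have := (h x (r/2) (by linarith)).1
  rwa [show 2 * (r/2) = r by ring] at this

lemma IsDoublingWith.lt_top {X : Type u} [PseudoMetricSpace X] [MeasurableSpace X]
    {μ : Measure X} {Cd : ℝ≥0} (h : IsDoublingWith μ Cd) (x : X) (r : ℝ) :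
    μ (ball x r) < ⊤ := by
  rcases le_or_gt r 0 with hr | hr
  · simp [ball_eq_empty.2 hr]
  · have h2 := h x (r/2) (by linarith)
    have : μ (ball x (2 * (r/2))) < ⊤ := lt_of_le_of_lt h2.2.1 h2.2.2
    rwa [show 2 * (r/2) = r by ring] at this

lemma IsDoublingWith.Cd_ne_zero {X : Type u} [PseudoMetricSpace X] [MeasurableSpace X]
    {μ : Measure X} {Cd : ℝ≥0} (h : IsDoublingWith μ Cd) (x : X) :
    (Cd : ℝ≥0∞) ≠ 0 := by
  intro h0
  have h1 := h x 1 one_pos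
  rw [h0, zero_mul] at h1
  exact absurd (le_antisymm h1.2.1 zero_le) (ne_of_gt h1.1)

lemma IsDoublingWith.iterate {X : Type u} [PseudoMetricSpace X] [MeasurableSpace X]
    {μ : Measure X} {Cd : ℝ≥0} (h : IsDoublingWith μ Cd) (x : X) {s : ℝ} (hs : 0 < s) :
    ∀ n : ℕ, μ (ball x (2 ^ n * s)) ≤ (Cd : ℝ≥0∞) ^ n * μ (ball x s) := by
  intro n
  induction n with
  | zero => simp
  | succ n ih =>
      have hpos : (0:ℝ) < 2 ^ n * s := by positivity
      have h1 := (h x (2 ^ n * s) hpos).2.1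
      have : μ (ball x (2 ^ (n+1) * s)) ≤ (Cd : ℝ≥0∞) * μ (ball x (2 ^ n * s)) := by
        rw [show (2:ℝ) ^ (n+1) * s = 2 * (2 ^ n * s) by ring]
        exact h1
      calc μ (ball x (2 ^ (n+1) * s)) ≤ (Cd : ℝ≥0∞) * μ (ball x (2 ^ n * s)) := this
        _ ≤ (Cd : ℝ≥0∞) * ((Cd : ℝ≥0∞) ^ n * μ (ball x s)) := by
            exact mul_le_mul_right ih _
        _ = (Cd : ℝ≥0∞) ^ (n+1) * μ (ball x s) := by ring

lemma totallyBounded_ball_of_doubling {X : Type u} [MetricSpace X] [MeasurableSpace X] [OpensMeasurableSpace X]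
    {μ : Measure X} {Cd : ℝ≥0} (h : IsDoublingWith μ Cd) (x : X) (r : ℝ) :
    TotallyBounded (ball x r) := by
  rcases le_or_gt r 0 with hr | hr
  · rw [ball_eq_empty.2 hr]; exact totallyBounded_empty
  rw [Metric.totallyBounded_iff]
  intro ε hε
  set P : Set X → Prop := fun S => S ⊆ ball x r ∧ ∀ a ∈ S, ∀ b ∈ S, a ≠ b → ε/2 ≤ dist a b
    with hP
  obtain ⟨S, -, hSP, hSmax⟩ :
      ∃ S, (∅ : Set X) ⊆ S ∧ P S ∧ ∀ ⦃t : Set X⦄, P t → S ⊆ t → t ⊆ S := by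
    obtain ⟨S, h1, h2⟩ := zorn_subset_nonempty {S | P S}
      (fun c hc hchain _ => by
        refine ⟨⋃₀ c, ⟨?_, ?_⟩, fun s hs => subset_sUnion_of_mem hs⟩
        · exact sUnion_subset fun s hs => (hc hs).1
        · rintro a ⟨s, hs, has⟩ b ⟨t, ht, hbt⟩ hab
          rcases hchain.total hs ht with hst | hts
          · exact (hc ht).2 a (hst has) b hbt hab
          · exact (hc hs).2 a has b (hts hbt) hab)
      ∅ ⟨empty_subset _, by simp⟩
    exact ⟨S, h1, h2.1, fun t ht hst => h2.le_of_ge ht hst⟩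
  -- S is finite
  have hSfin : S.Finite := by
    by_contra hinf
    have hCd0 : (Cd : ℝ≥0∞) ≠ 0 := h.Cd_ne_zero x
    obtain ⟨n, hn⟩ := pow_unbounded_of_one_lt (R := ℝ) ((2*r + ε)/(ε/4)) one_lt_two
    have hn' : 2*r + ε ≤ 2 ^ n * (ε/4) := by
      rw [div_lt_iff₀ (by linarith)] at hn
      linarith
    set B := μ (ball x (r + ε)) with hB
    have hBpos : 0 < B := h.pos x (by linarith)
    have hBlt : B < ⊤ := h.lt_top x _
    set c : ℝ≥0∞ := B / (Cd : ℝ≥0∞) ^ n with hc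
    have hc0 : c ≠ 0 := by
      simp only [hc, ne_eq, ENNReal.div_eq_zero_iff, not_or]
      exact ⟨ne_of_gt hBpos, (ENNReal.pow_ne_top (by simp [ENNReal.coe_ne_top])).elim ∘ fun h => h⟩
    have hctop : c ≠ ⊤ := ne_of_lt (ENNReal.div_lt_top (ne_of_lt hBlt) (pow_ne_zero _ hCd0))
    -- lower bound for measure of small balls
    have hlow : ∀ y ∈ S, c ≤ μ (ball y (ε/4)) := by
      intro y hy
      have hsub : ball x (r + ε) ⊆ ball y (2 ^ n * (ε/4)) := by
        intro z hz
        have hd : dist z y ≤ dist z x + dist x y := dist_triangle z x y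
        have h1 : dist z x < r + ε := mem_ball.mp hz
        have h2 : dist x y < r := by
          have := hSP.1 hy; rw [mem_ball] at this; linarith [dist_comm x y ▸ this]
        rw [mem_ball]
        calc dist z y ≤ dist z x + dist x y := hd
          _ < 2*r + ε := by linarith
          _ ≤ 2 ^ n * (ε/4) := hn'
      have step1 : B ≤ (Cd : ℝ≥0∞) ^ n * μ (ball y (ε/4)) :=
        le_trans (measure_mono hsub) (h.iterate y (by linarith) n)
      rw [hc, ENNReal.div_le_iff (pow_ne_zero _ hCd0)
        (ENNReal.pow_ne_top ENNReal.coe_ne_top)]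
      rw [mul_comm] at step1
      exact step1
    -- choose a big finite subset
    obtain ⟨m, hm⟩ := ENNReal.exists_nat_gt (r := B / c) (ENNReal.div_lt_top (ne_of_lt hBlt) hc0).ne
    obtain ⟨T, hTS, hTcard⟩ := Set.Infinite.exists_subset_card_eq hinf m
    have hdisj : (↑T : Set X).PairwiseDisjoint (fun y => ball y (ε/4)) := by
      intro a ha b hb hab
      exact Metric.ball_disjoint_ball (by
        have := hSP.2 a (hTS ha) b (hTS hb) hab
        linarith)
    have hsum : μ (⋃ y ∈ T, ball y (ε/4)) = ∑ y ∈ T, μ (ball y (ε/4)) :=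
      measure_biUnion_finset hdisj (fun b _ => measurableSet_ball)
    have hsub2 : (⋃ y ∈ T, ball y (ε/4)) ⊆ ball x (r + ε) := by
      refine iUnion₂_subset fun y hy z hz => ?_
      have h1 : dist z y < ε/4 := mem_ball.mp hz
      have h2 : dist y x < r := mem_ball.mp (hSP.1 (hTS hy))
      rw [mem_ball]
      calc dist z x ≤ dist z y + dist y x := dist_triangle z y x
        _ < r + ε := by linarith
    have hge : (m : ℝ≥0∞) * c ≤ B := by
      calc (m : ℝ≥0∞) * c = T.card • c := by rw [hTcard]; simp [nsmul_eq_mul]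
        _ ≤ ∑ y ∈ T, μ (ball y (ε/4)) :=
            Finset.card_nsmul_le_sum T _ c (fun y hy => hlow y (hTS hy))
        _ = μ (⋃ y ∈ T, ball y (ε/4)) := hsum.symm
        _ ≤ B := measure_mono hsub2
    rw [ENNReal.div_lt_iff (Or.inl hc0) (Or.inl hctop)] at hm
    exact absurd hge (not_le.mpr hm)
  -- maximality gives covering
  refine ⟨S, hSfin, fun z hz => ?_⟩
  by_contra hzc
  simp only [mem_iUnion, mem_ball, not_exists, not_lt, exists_prop, not_and] at hzc
  have hzS : z ∉ S := by
    intro hzmem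
    have := hzc z hzmem
    rw [dist_self] at this
    linarith
  have hP' : P (S ∪ {z}) := by
    constructor
    · exact union_subset hSP.1 (by simpa using hz)
    · rintro a (ha | ha) b (hb | hb) hab
      · exact hSP.2 a ha b hb hab
      · rw [mem_singleton_iff] at hb; subst hb
        have := hzc a ha; rw [dist_comm]; linarith
      · rw [mem_singleton_iff] at ha; subst ha
        have := hzc b hb; linarith
      · rw [mem_singleton_iff] at ha hb; subst ha; subst hb; exact absurd rfl hab
  exact hzS (hSmax hP' subset_union_left (mem_union_right S rfl))

lemma properSpace_of_doubling {X : Type u} [MetricSpace X] [MeasurableSpace X]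
    [OpensMeasurableSpace X] [CompleteSpace X]
    {μ : Measure X} {Cd : ℝ≥0} (h : IsDoublingWith μ Cd) : ProperSpace X := by
  constructor
  intro x r
  rw [isCompact_iff_totallyBounded_isComplete]
  refine ⟨TotallyBounded.subset (closedBall_subset_ball (lt_add_one r))
    (totallyBounded_ball_of_doubling h x (r+1)), IsClosed.isComplete isClosed_closedBall⟩

section MY
variable {X : Type u} [MetricSpace X] [Nonempty X]
variable {g : X → ℝ} {τ M : ℝ}

/-- Moreau–Yosida approximation. -/
noncomputable def myg (g : X → ℝ) (k : ℕ) (x : X) : ℝ := ⨅ y, (g y + k * dist x y)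

lemma myg_bdd (hgτ : ∀ x, τ ≤ g x) (k : ℕ) (x : X) :
    BddBelow (range fun y => g y + k * dist x y) := by
  refine ⟨τ, ?_⟩
  rintro v ⟨y, rfl⟩
  have := hgτ y
  have hd : (0:ℝ) ≤ (k:ℝ) * dist x y := by positivity
  simp only []
  linarith

lemma myg_le (hgτ : ∀ x, τ ≤ g x) (k : ℕ) (x : X) : myg g k x ≤ g x := by
  have := ciInf_le (myg_bdd hgτ k x) x
  simpa [myg] using this

lemma le_myg (hgτ : ∀ x, τ ≤ g x) (k : ℕ) (x : X) : τ ≤ myg g k x := by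
  refine le_ciInf fun y => ?_
  have := hgτ y
  have hd : (0:ℝ) ≤ (k:ℝ) * dist x y := by positivity
  linarith

lemma myg_mono (hgτ : ∀ x, τ ≤ g x) (k : ℕ) (x : X) : myg g k x ≤ myg g (k+1) x := by
  refine le_ciInf fun y => ?_
  refine le_trans (ciInf_le (myg_bdd hgτ k x) y) ?_
  have : ((k:ℝ)) * dist x y ≤ ((k:ℝ)+1) * dist x y := by nlinarith [dist_nonneg (x := x) (y := y)]
  push_cast
  linarith

lemma myg_lip (hgτ : ∀ x, τ ≤ g x) (k : ℕ) : LipschitzWith k (myg g k) := by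
  refine LipschitzWith.of_dist_le_mul fun x z => ?_
  have key : ∀ x z : X, myg g k x ≤ myg g k z + k * dist x z := by
    intro x z
    have h1 : ∀ y, myg g k x - k * dist x z ≤ g y + k * dist z y := by
      intro y
      have h2 := ciInf_le (myg_bdd hgτ k x) y
      have h3 : dist x y ≤ dist x z + dist z y := dist_triangle x z y
      have hk : (0:ℝ) ≤ (k:ℝ) := Nat.cast_nonneg k
      simp only [myg] at h2 ⊢
      nlinarith
    have := le_ciInf h1
    simp only [myg] at this ⊢
    linarith
  rw [Real.dist_eq, abs_sub_le_iff]
  constructor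
  · have := key x z; push_cast; linarith
  · have := key z x; rw [dist_comm] at this; push_cast; linarith

lemma myg_tendsto (hgτ : ∀ x, τ ≤ g x) (hgM : ∀ x, g x ≤ M)
    (hlsc : LowerSemicontinuous g) (x : X) :
    Tendsto (fun k => myg g k x) atTop (𝓝 (g x)) := by
  have hmono : Monotone fun k => myg g k x := monotone_nat_of_le_succ fun k => myg_mono hgτ k x
  have hbdd : BddAbove (range fun k => myg g k x) := ⟨g x, by rintro v ⟨k, rfl⟩; exact myg_le hgτ k x⟩
  have htend := tendsto_atTop_ciSup hmono hbdd
  have hkey : ∀ ε : ℝ, 0 < ε → ∃ k : ℕ, g x - ε ≤ myg g k x := by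
    intro ε hε
    have := hlsc x (g x - ε) (by linarith)
    rw [Metric.eventually_nhds_iff] at this
    obtain ⟨δ, hδ, hδ'⟩ := this
    obtain ⟨k, hk⟩ := exists_nat_ge ((M - τ)/δ)
    refine ⟨k, le_ciInf fun y => ?_⟩
    rcases lt_or_ge (dist y x) δ with hy | hy
    · have := hδ' hy
      have hd : (0:ℝ) ≤ (k:ℝ) * dist x y := by positivity
      linarith
    · have h1 : (M - τ)/δ * δ ≤ (k:ℝ) * dist x y := by
        have : (k:ℝ) * δ ≤ (k:ℝ) * dist x y := by
          rw [dist_comm]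
          nlinarith [(Nat.cast_nonneg k : (0:ℝ) ≤ k)]
        nlinarith
      rw [div_mul_cancel₀ _ (ne_of_gt hδ)] at h1
      have := hgτ y
      have := hgM x
      linarith
  have hsup : (⨆ k, myg g k x) = g x := by
    refine le_antisymm (ciSup_le fun k => myg_le hgτ k x) ?_
    by_contra hlt
    push_neg at hlt
    obtain ⟨k, hk⟩ := hkey ((g x - ⨆ k, myg g k x)/2) (by linarith)
    have := le_ciSup hbdd k
    linarith
  rwa [hsup] at htend

end MY

lemma curve_subseq {X : Type u} [MetricSpace X] [ProperSpace X]
    {S : ℝ} (hS : 0 ≤ S) (x : X) (γs : ℕ → ℝ → X)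
    (hlip : ∀ k, ∀ s ∈ Icc 0 S, ∀ t ∈ Icc 0 S, dist (γs k s) (γs k t) ≤ dist s t)
    (h0 : ∀ k, γs k 0 = x) :
    ∃ (φ : ℕ → ℕ) (γ : ℝ → X), StrictMono φ ∧ γ 0 = x ∧
      (∀ t ∈ Icc 0 S, Tendsto (fun k => γs (φ k) t) atTop (𝓝 (γ t))) := by
  have h0m : (0:ℝ) ∈ Icc 0 S := ⟨le_refl _, hS⟩
  haveI : Nonempty (Icc (0:ℝ) S) := ⟨⟨0, h0m⟩⟩
  set e : ℕ → ℝ := fun n => (TopologicalSpace.denseSeq (Icc (0:ℝ) S) n : ℝ) with he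
  have hem : ∀ n, e n ∈ Icc 0 S := fun n => (TopologicalSpace.denseSeq (Icc (0:ℝ) S) n).2
  have hdense : ∀ t ∈ Icc 0 S, ∀ ε : ℝ, 0 < ε → ∃ n, dist t (e n) < ε := by
    intro t ht ε hε
    have := Metric.denseRange_iff.mp (TopologicalSpace.denseRange_denseSeq (Icc (0:ℝ) S)) ⟨t, ht⟩ ε hε
    obtain ⟨n, hn⟩ := this
    exact ⟨n, by rwa [Subtype.dist_eq] at hn⟩
  have hmem : ∀ k t, t ∈ Icc 0 S → γs k t ∈ closedBall x S := by
    intro k t ht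
    rw [mem_closedBall]
    calc dist (γs k t) x = dist (γs k t) (γs k 0) := by rw [h0]
      _ ≤ dist t 0 := hlip k t ht 0 h0m
      _ ≤ S := by rw [Real.dist_eq, sub_zero, abs_of_nonneg ht.1]; exact ht.2
  haveI : CompactSpace (closedBall x S) := isCompact_iff_compactSpace.mp (isCompact_closedBall x S)
  set F : ℕ → (ℕ → closedBall x S) := fun k n => ⟨γs k (e n), hmem k (e n) (hem n)⟩ with hF
  obtain ⟨G, -, φ, hφ, hconv⟩ := isCompact_univ.tendsto_subseq (x := F) (fun _ => mem_univ _)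
  have hcoord : ∀ n, Tendsto (fun k => γs (φ k) (e n)) atTop (𝓝 (G n : X)) := by
    intro n
    have h1 := tendsto_pi_nhds.mp hconv n
    exact ((continuous_subtype_val.tendsto (G n)).comp h1)
  have hcauchy : ∀ t ∈ Icc 0 S, CauchySeq (fun k => γs (φ k) t) := by
    intro t ht
    rw [Metric.cauchySeq_iff]
    intro ε hε
    obtain ⟨n, hn⟩ := hdense t ht (ε/3) (by linarith)
    obtain ⟨N, hN⟩ := (Metric.cauchySeq_iff.mp (hcoord n).cauchySeq) (ε/3) (by linarith)
    refine ⟨N, fun a ha b hb => ?_⟩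
    have h1 : dist (γs (φ a) t) (γs (φ a) (e n)) < ε/3 :=
      lt_of_le_of_lt (hlip (φ a) t ht (e n) (hem n)) hn
    have h2 : dist (γs (φ b) (e n)) (γs (φ b) t) < ε/3 := by
      refine lt_of_le_of_lt (hlip (φ b) (e n) (hem n) t ht) ?_
      rwa [dist_comm]
    have h3 := hN a ha b hb
    calc dist (γs (φ a) t) (γs (φ b) t)
        ≤ dist (γs (φ a) t) (γs (φ a) (e n)) + dist (γs (φ a) (e n)) (γs (φ b) (e n))
          + dist (γs (φ b) (e n)) (γs (φ b) t) := dist_triangle4 _ _ _ _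
      _ < ε/3 + ε/3 + ε/3 := by exact add_lt_add (add_lt_add h1 h3) h2
      _ = ε := by ring
  have hlim : ∀ t, t ∈ Icc 0 S → ∃ y, Tendsto (fun k => γs (φ k) t) atTop (𝓝 y) :=
    fun t ht => cauchySeq_tendsto_of_complete (hcauchy t ht)
  classical
  refine ⟨φ, fun t => if h : t ∈ Icc 0 S then (hlim t h).choose else x, hφ, ?_, ?_⟩
  · simp only []
    rw [dif_pos h0m]
    refine tendsto_nhds_unique ((hlim 0 h0m).choose_spec) ?_
    simp only [h0]
    exact tendsto_const_nhds
  · intro t ht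
    simp only []
    rw [dif_pos ht]
    exact (hlim t ht).choose_spec

section PFV
variable {X : Type u} [MetricSpace X]
variable (f gg : X → ℝ)

def pfvSet (x : X) : Set ℝ :=
  {v | ∃ L, 0 ≤ L ∧ ∃ γ : ℝ → X, LipschitzOnWith 1 γ (Icc 0 L) ∧ γ 0 = x ∧
      v = f (γ L) + ∫ t in (0:ℝ)..L, gg (γ t)}

noncomputable def pfv (x : X) : ℝ := sInf (pfvSet f gg x)

variable {f gg}

lemma pfvSet_self_mem (x : X) : f x ∈ pfvSet f gg x := by
  refine ⟨0, le_refl _, fun _ => x, ((LipschitzWith.const x).weaken (zero_le_one)).lipschitzOnWith, rfl, ?_⟩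
  simp

lemma pfvSet_nonempty (x : X) : (pfvSet f gg x).Nonempty := ⟨f x, pfvSet_self_mem x⟩

lemma pfvSet_bddBelow (hf0 : ∀ x, 0 ≤ f x) (hgg0 : ∀ x, 0 ≤ gg x) (x : X) :
    BddBelow (pfvSet f gg x) := by
  refine ⟨0, fun v hv => ?_⟩
  obtain ⟨L, hL, γ, hγ, hγ0, rfl⟩ := hv
  have h1 : 0 ≤ ∫ t in (0:ℝ)..L, gg (γ t) :=
    intervalIntegral.integral_nonneg hL (fun u _ => hgg0 _)
  have := hf0 (γ L)
  linarith

lemma pfv_le_f (hf0 : ∀ x, 0 ≤ f x) (hgg0 : ∀ x, 0 ≤ gg x) (x : X) :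
    pfv f gg x ≤ f x :=
  csInf_le (pfvSet_bddBelow hf0 hgg0 x) (pfvSet_self_mem x)

lemma pfv_nonneg (hf0 : ∀ x, 0 ≤ f x) (hgg0 : ∀ x, 0 ≤ gg x) (x : X) :
    0 ≤ pfv f gg x :=
  le_csInf (pfvSet_nonempty x) (fun v hv => by
    obtain ⟨L, hL, γ, hγ, hγ0, rfl⟩ := hv
    have h1 : 0 ≤ ∫ t in (0:ℝ)..L, gg (γ t) :=
      intervalIntegral.integral_nonneg hL (fun u _ => hgg0 _)
    have := hf0 (γ L)
    linarith)

lemma lip_concat {γ γ' : ℝ → X} {L L' : ℝ} (hL : 0 ≤ L) (hL' : 0 ≤ L')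
    (h : LipschitzOnWith 1 γ (Icc 0 L)) (h' : LipschitzOnWith 1 γ' (Icc 0 L'))
    (hend : γ L = γ' 0) :
    LipschitzOnWith 1 (fun t => if t ≤ L then γ t else γ' (t - L)) (Icc 0 (L + L')) := by
  rw [lipschitzOnWith_iff_dist_le_mul]
  have key : ∀ s ∈ Icc (0:ℝ) (L + L'), ∀ t ∈ Icc (0:ℝ) (L + L'), s ≤ t →
      dist (if s ≤ L then γ s else γ' (s - L)) (if t ≤ L then γ t else γ' (t - L))
        ≤ dist s t := by
    intro s hs t ht hst
    by_cases h1 : s ≤ L <;> by_cases h2 : t ≤ L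
    · rw [if_pos h1, if_pos h2]
      have := h.dist_le_mul s ⟨hs.1, h1⟩ t ⟨ht.1, h2⟩
      simpa using this
    · rw [if_pos h1, if_neg h2]
      push_neg at h2
      have hm1 : t - L ∈ Icc (0:ℝ) L' := ⟨by linarith, by linarith [ht.2]⟩
      have hm0 : (0:ℝ) ∈ Icc (0:ℝ) L' := ⟨le_refl _, hL'⟩
      calc dist (γ s) (γ' (t - L)) ≤ dist (γ s) (γ L) + dist (γ' 0) (γ' (t - L)) := by
            rw [hend]; exact dist_triangle _ _ _
        _ ≤ dist s L + dist (0:ℝ) (t - L) := by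
            have i1 := h.dist_le_mul s ⟨hs.1, h1⟩ L ⟨hL, le_refl _⟩
            have i2 := h'.dist_le_mul 0 hm0 (t - L) hm1
            simp only [NNReal.coe_one, one_mul] at i1 i2
            linarith
        _ ≤ dist s t := by
            rw [Real.dist_eq, Real.dist_eq, Real.dist_eq]
            rw [abs_of_nonpos (by linarith), abs_of_nonpos (by linarith),
              abs_of_nonpos (by linarith)]
            linarith
    · exact absurd (hst.trans h2) h1
    · rw [if_neg h1, if_neg h2]
      push_neg at h1 h2
      have hm1 : s - L ∈ Icc (0:ℝ) L' := ⟨by linarith, by linarith [hs.2]⟩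
      have hm2 : t - L ∈ Icc (0:ℝ) L' := ⟨by linarith, by linarith [ht.2]⟩
      have := h'.dist_le_mul (s - L) hm1 (t - L) hm2
      simp only [NNReal.coe_one, one_mul] at this
      refine this.trans ?_
      rw [Real.dist_eq, Real.dist_eq]
      simp [sub_sub_sub_cancel_right]
  intro s hs t ht
  rcases le_total s t with hst | hst
  · simpa using key s hs t ht hst
  · rw [dist_comm, dist_comm (s:ℝ) t]
    simpa using key t ht s hs hst

lemma concat_integral {γ γ' : ℝ → X} {L L' : ℝ} (hL : 0 ≤ L) (hL' : 0 ≤ L')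
    (h : LipschitzOnWith 1 γ (Icc 0 L)) (h' : LipschitzOnWith 1 γ' (Icc 0 L'))
    (hend : γ L = γ' 0) (hgg : Continuous gg) :
    (∫ t in (0:ℝ)..(L + L'), gg ((fun t => if t ≤ L then γ t else γ' (t - L)) t))
      = (∫ t in (0:ℝ)..L, gg (γ t)) + ∫ t in (0:ℝ)..L', gg (γ' t) := by
  set γ₂ : ℝ → X := fun t => if t ≤ L then γ t else γ' (t - L) with hγ₂
  have heq1 : EqOn (fun t => gg (γ₂ t)) (fun t => gg (γ t)) (Icc 0 L) := by
    intro t ht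
    simp only [hγ₂, if_pos ht.2]
  have heq2 : EqOn (fun t => gg (γ₂ t)) (fun t => gg (γ' (t - L))) (Icc L (L + L')) := by
    intro t ht
    show gg (γ₂ t) = gg (γ' (t - L))
    by_cases h1 : t ≤ L
    · have htL : t = L := le_antisymm h1 ht.1
      simp only [hγ₂, if_pos h1]
      rw [htL, hend, sub_self]
    · simp only [hγ₂, if_neg h1]
  have hc1 : ContinuousOn (fun t => gg (γ t)) (Icc (0:ℝ) L) :=
    hgg.comp_continuousOn h.continuousOn
  have hc1' : ContinuousOn (fun t => gg (γ' t)) (Icc (0:ℝ) L') :=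
    hgg.comp_continuousOn h'.continuousOn
  have hc2 : ContinuousOn (fun t => gg (γ' (t - L))) (Icc L (L + L')) := by
    refine hc1'.comp (continuous_sub_right L).continuousOn ?_
    intro t ht
    simp only [mem_Icc] at ht ⊢
    exact ⟨by linarith [ht.1], by linarith [ht.2]⟩
  have i1 : IntervalIntegrable (fun t => gg (γ₂ t)) volume 0 L := by
    refine ContinuousOn.intervalIntegrable ?_
    rw [uIcc_of_le hL]
    exact hc1.congr heq1
  have i2 : IntervalIntegrable (fun t => gg (γ₂ t)) volume L (L + L') := by
    refine ContinuousOn.intervalIntegrable ?_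
    rw [uIcc_of_le (by linarith)]
    exact hc2.congr heq2
  have hsplit := intervalIntegral.integral_add_adjacent_intervals i1 i2
  have e1 : (∫ t in (0:ℝ)..L, gg (γ₂ t)) = ∫ t in (0:ℝ)..L, gg (γ t) :=
    intervalIntegral.integral_congr (by rwa [uIcc_of_le hL])
  have e2 : (∫ t in L..(L + L'), gg (γ₂ t)) = ∫ t in (0:ℝ)..L', gg (γ' t) := by
    have h3 := intervalIntegral.integral_comp_add_right (a := 0) (b := L') (fun t => gg (γ₂ t)) L
    rw [zero_add, add_comm L' L] at h3
    rw [← h3]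
    refine intervalIntegral.integral_congr ?_
    intro u hu
    rw [uIcc_of_le hL'] at hu
    have := heq2 (show u + L ∈ Icc L (L + L') by
      constructor <;> [linarith [hu.1]; linarith [hu.2]])
    simp only at this ⊢
    rw [this]
    simp
  rw [← hsplit, e1, e2]

lemma pfv_le_along (hf0 : ∀ x, 0 ≤ f x) (hgg0 : ∀ x, 0 ≤ gg x) (hgg : Continuous gg)
    {L : ℝ} (hL : 0 ≤ L) {γ : ℝ → X} (hγ : LipschitzOnWith 1 γ (Icc 0 L)) :
    pfv f gg (γ 0) ≤ pfv f gg (γ L) + ∫ t in (0:ℝ)..L, gg (γ t) := by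
  rw [← sub_le_iff_le_add]
  refine le_csInf (pfvSet_nonempty (γ L)) (fun v hv => ?_)
  obtain ⟨L', hL', γ', hγ', hγ'0, rfl⟩ := hv
  rw [sub_le_iff_le_add]
  set γ₂ : ℝ → X := fun t => if t ≤ L then γ t else γ' (t - L) with hγ₂
  have hend : γ L = γ' 0 := hγ'0.symm
  have hmem : (f (γ₂ (L + L')) + ∫ t in (0:ℝ)..(L+L'), gg (γ₂ t)) ∈ pfvSet f gg (γ 0) := by
    refine ⟨L + L', by linarith, γ₂, lip_concat hL hL' hγ hγ' hend, ?_, rfl⟩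
    simp only [hγ₂, if_pos hL]
  have h1 : pfv f gg (γ 0) ≤ f (γ₂ (L + L')) + ∫ t in (0:ℝ)..(L+L'), gg (γ₂ t) :=
    csInf_le (pfvSet_bddBelow hf0 hgg0 (γ 0)) hmem
  have hsplit := concat_integral hL hL' hγ hγ' hend hgg
  have hendpt : γ₂ (L + L') = γ' L' := by
    by_cases h2 : L + L' ≤ L
    · have hL'0 : L' = 0 := by linarith
      subst hL'0
      simp only [hγ₂, add_zero, if_pos (le_refl L)]
      exact hend
    · simp only [hγ₂, if_neg h2, add_sub_cancel_left]
  rw [hendpt, hsplit] at h1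
  linarith

lemma pfv_dist_le (hf0 : ∀ x, 0 ≤ f x) (hgg0 : ∀ x, 0 ≤ gg x) (hgg : Continuous gg)
    {L : ℝ} (hL : 0 ≤ L) {γ : ℝ → X} (hγ : LipschitzOnWith 1 γ (Icc 0 L)) :
    |pfv f gg (γ 0) - pfv f gg (γ L)| ≤ ∫ t in (0:ℝ)..L, gg (γ t) := by
  have h1 := pfv_le_along hf0 hgg0 hgg hL hγ
  set γr : ℝ → X := fun t => γ (L - t) with hγr
  have hγrl : LipschitzOnWith 1 γr (Icc 0 L) := by
    rw [lipschitzOnWith_iff_dist_le_mul]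
    intro s hs t ht
    have := hγ.dist_le_mul (L - s) ⟨by linarith [hs.2], by linarith [hs.1]⟩
      (L - t) ⟨by linarith [ht.2], by linarith [ht.1]⟩
    simp only [NNReal.coe_one, one_mul] at this ⊢
    refine this.trans ?_
    rw [Real.dist_eq, Real.dist_eq]
    rw [show L - s - (L - t) = -(s - t) by ring, abs_neg]
  have h2 := pfv_le_along hf0 hgg0 hgg hL hγrl
  have hint : (∫ t in (0:ℝ)..L, gg (γr t)) = ∫ t in (0:ℝ)..L, gg (γ t) := by
    have := intervalIntegral.integral_comp_sub_left (a := 0) (b := L) (fun t => gg (γ t)) L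
    simpa using this
  have hr0 : γr 0 = γ L := by simp [hγr]
  have hrL : γr L = γ 0 := by simp [hγr]
  rw [hr0, hrL, hint] at h2
  rw [abs_sub_le_iff]
  constructor <;> linarith

lemma pfv_isUpperGradient (hf0 : ∀ x, 0 ≤ f x) (hgg0 : ∀ x, 0 ≤ gg x)
    (hgg : Continuous gg) : IsUpperGradientOf gg (pfv f gg) :=
  fun _L hL _γ hγ => pfv_dist_le hf0 hgg0 hgg hL hγ

lemma pfv_lipschitz (hgeo : IsGeodesic X) (hf0 : ∀ x, 0 ≤ f x) (hgg0 : ∀ x, 0 ≤ gg x)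
    (hgg : Continuous gg) {M : ℝ} (hM : 0 ≤ M) (hggM : ∀ x, gg x ≤ M) :
    LipschitzWith M.toNNReal (pfv f gg) := by
  refine LipschitzWith.of_dist_le_mul fun x y => ?_
  obtain ⟨γ, hγ, hγ0, hγL⟩ := hgeo x y
  have h1 := pfv_dist_le hf0 hgg0 hgg dist_nonneg hγ
  rw [hγ0, hγL] at h1
  have h2 : (∫ t in (0:ℝ)..(dist x y), gg (γ t)) ≤ M * dist x y := by
    have hi : IntervalIntegrable (fun t => gg (γ t)) volume 0 (dist x y) := by
      refine ContinuousOn.intervalIntegrable ?_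
      rw [uIcc_of_le dist_nonneg]
      exact hgg.comp_continuousOn hγ.continuousOn
    calc (∫ t in (0:ℝ)..(dist x y), gg (γ t)) ≤ ∫ _t in (0:ℝ)..(dist x y), M :=
          intervalIntegral.integral_mono_on dist_nonneg hi intervalIntegrable_const
            (fun u _ => hggM _)
      _ = M * dist x y := by rw [intervalIntegral.integral_const, smul_eq_mul, sub_zero, mul_comm]
  rw [Real.dist_eq, Real.coe_toNNReal _ hM]
  exact le_trans h1 h2

lemma pfv_mono_gg {gg' : X → ℝ} (hf0 : ∀ x, 0 ≤ f x) (hgg0 : ∀ x, 0 ≤ gg x)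
    (hgg : Continuous gg) (hgg' : Continuous gg') (hle : ∀ x, gg x ≤ gg' x) (x : X) :
    pfv f gg x ≤ pfv f gg' x := by
  refine le_csInf (pfvSet_nonempty x) (fun v hv => ?_)
  obtain ⟨L, hL, γ, hγ, hγ0, rfl⟩ := hv
  have hcγ : ContinuousOn γ (Icc (0:ℝ) L) := hγ.continuousOn
  have i1 : IntervalIntegrable (fun t => gg (γ t)) volume 0 L := by
    refine ContinuousOn.intervalIntegrable ?_
    rw [uIcc_of_le hL]; exact hgg.comp_continuousOn hcγ
  have i2 : IntervalIntegrable (fun t => gg' (γ t)) volume 0 L := by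
    refine ContinuousOn.intervalIntegrable ?_
    rw [uIcc_of_le hL]; exact hgg'.comp_continuousOn hcγ
  have hmono : (∫ t in (0:ℝ)..L, gg (γ t)) ≤ ∫ t in (0:ℝ)..L, gg' (γ t) :=
    intervalIntegral.integral_mono_on hL i1 i2 (fun u _ => hle _)
  have hmem : (f (γ L) + ∫ t in (0:ℝ)..L, gg (γ t)) ∈ pfvSet f gg x :=
    ⟨L, hL, γ, hγ, hγ0, rfl⟩
  have hinf : pfv f gg x ≤ f (γ L) + ∫ t in (0:ℝ)..L, gg (γ t) :=
    csInf_le (pfvSet_bddBelow hf0 hgg0 x) hmem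
  linarith

end PFV

section CONV
variable {X : Type u} [MetricSpace X] [Nonempty X] [ProperSpace X]
variable {f g : X → ℝ} {τ M : ℝ}

lemma pfv_tendsto (hτ : 0 < τ) (hf0 : ∀ x, 0 ≤ f x) (hfc : Continuous f)
    (hgτ : ∀ x, τ ≤ g x) (hgM : ∀ x, g x ≤ M) (hlsc : LowerSemicontinuous g)
    (hgug : IsUpperGradientOf g f) (x : X) :
    Tendsto (fun k => pfv f (myg g k) x) atTop (𝓝 (f x)) := by
  have hmyg0 : ∀ k : ℕ, ∀ y, 0 ≤ myg g k y := fun k y => le_trans hτ.le (le_myg hgτ k y)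
  have hmygcont : ∀ k : ℕ, Continuous (myg g k) := fun k => (myg_lip hgτ k).continuous
  have hmygM : ∀ k : ℕ, ∀ y, myg g k y ≤ M := fun k y => (myg_le hgτ k y).trans (hgM y)
  have hmygmono : ∀ y, Monotone (fun k : ℕ => myg g k y) :=
    fun y => monotone_nat_of_le_succ (fun k => myg_mono hgτ k y)
  have hmono : Monotone (fun k : ℕ => pfv f (myg g k) x) :=
    monotone_nat_of_le_succ (fun k =>
      pfv_mono_gg hf0 (hmyg0 k) (hmygcont k) (hmygcont (k+1)) (fun y => myg_mono hgτ k y) x)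
  have hub : ∀ k : ℕ, pfv f (myg g k) x ≤ f x := fun k => pfv_le_f hf0 (hmyg0 k) x
  have htend := tendsto_atTop_ciSup hmono ⟨f x, by rintro v ⟨k, rfl⟩; exact hub k⟩
  have hkey : ∀ δ : ℝ, 0 < δ → ∃ k : ℕ, f x - δ < pfv f (myg g k) x := by
    intro δ hδ
    by_contra hcon
    push_neg at hcon
    -- choose near-optimal competitors
    have hcomp : ∀ k : ℕ, ∃ L : ℝ, 0 ≤ L ∧ ∃ γ : ℝ → X, LipschitzOnWith 1 γ (Icc 0 L) ∧
        γ 0 = x ∧ f (γ L) + (∫ t in (0:ℝ)..L, myg g k (γ t)) < f x - δ/2 := by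
      intro k
      have hlt : pfv f (myg g k) x < f x - δ/2 := lt_of_le_of_lt (hcon k) (by linarith)
      obtain ⟨v, hv, hvlt⟩ := exists_lt_of_csInf_lt (pfvSet_nonempty x) hlt
      obtain ⟨L, hL, γ, hγ, hγ0, rfl⟩ := hv
      exact ⟨L, hL, γ, hγ, hγ0, hvlt⟩
    choose L hL0 γs hγlip hγ0 hval using hcomp
    -- integrability of the integrands
    have hγcont : ∀ k, ContinuousOn (γs k) (Icc 0 (L k)) := fun k => (hγlip k).continuousOn
    have hint : ∀ j k : ℕ, IntervalIntegrable (fun t => myg g j (γs k t)) volume 0 (L k) := by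
      intro j k
      refine ContinuousOn.intervalIntegrable ?_
      rw [uIcc_of_le (hL0 k)]
      exact (hmygcont j).comp_continuousOn (hγcont k)
    -- length bound
    have hfx0 : 0 ≤ f x := hf0 x
    set S : ℝ := f x / τ + 1 with hSdef
    have hS : 0 < S := by positivity
    have hLS : ∀ k, L k ≤ S := by
      intro k
      have h1 : τ * L k ≤ ∫ t in (0:ℝ)..(L k), myg g k (γs k t) := by
        have := intervalIntegral.integral_mono_on (hL0 k) intervalIntegrable_const
          (hint k k) (fun u _ => le_myg hgτ k (γs k u))
        rwa [intervalIntegral.integral_const, smul_eq_mul, sub_zero, mul_comm] at this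
      have h2 := hval k
      have h3 := hf0 (γs k (L k))
      have h4 : τ * L k ≤ f x := by linarith
      rw [hSdef]
      rw [← le_div_iff₀' hτ] at h4
      linarith
    -- reparametrized curves on [0,S]
    set c : ℕ → ℝ := fun k => L k / S with hcdef
    have hc0 : ∀ k, 0 ≤ c k := fun k => div_nonneg (hL0 k) hS.le
    have hc1 : ∀ k, c k ∈ Icc (0:ℝ) 1 := fun k =>
      ⟨hc0 k, by rw [hcdef]; exact (div_le_one hS).mpr (hLS k)⟩
    have hcS : ∀ k, c k * S = L k := fun k => by
      rw [hcdef]; field_simp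
    set γ2 : ℕ → ℝ → X := fun k u => γs k (c k * u) with hγ2def
    have hmaps : ∀ k, ∀ u ∈ Icc (0:ℝ) S, c k * u ∈ Icc 0 (L k) := by
      intro k u hu
      constructor
      · exact mul_nonneg (hc0 k) hu.1
      · calc c k * u ≤ c k * S := by nlinarith [hc0 k, hu.2, hu.1]
          _ = L k := hcS k
    have hlipc : ∀ k, ∀ s ∈ Icc (0:ℝ) S, ∀ t ∈ Icc (0:ℝ) S,
        dist (γ2 k s) (γ2 k t) ≤ c k * dist s t := by
      intro k s hs t ht
      have := (hγlip k).dist_le_mul (c k * s) (hmaps k s hs) (c k * t) (hmaps k t ht)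
      simp only [NNReal.coe_one, one_mul] at this
      refine this.trans ?_
      rw [Real.dist_eq, Real.dist_eq, ← mul_sub, abs_mul, abs_of_nonneg (hc0 k)]
    have hlip1 : ∀ k, ∀ s ∈ Icc (0:ℝ) S, ∀ t ∈ Icc (0:ℝ) S,
        dist (γ2 k s) (γ2 k t) ≤ dist s t := by
      intro k s hs t ht
      refine (hlipc k s hs t ht).trans ?_
      nlinarith [(hc1 k).2, dist_nonneg (x := s) (y := t), hc0 k]
    have hγ20 : ∀ k, γ2 k 0 = x := by
      intro k
      simp only [hγ2def, mul_zero]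
      exact hγ0 k
    have hγ2cont : ∀ k, ContinuousOn (γ2 k) (Icc 0 S) := by
      intro k
      refine (hγcont k).comp (continuous_const.mul continuous_id).continuousOn ?_
      intro u hu
      exact hmaps k u hu
    have hint2 : ∀ j k : ℕ, IntervalIntegrable (fun t => myg g j (γ2 k t)) volume 0 S := by
      intro j k
      refine ContinuousOn.intervalIntegrable ?_
      rw [uIcc_of_le hS.le]
      exact (hmygcont j).comp_continuousOn (hγ2cont k)
    -- transfer of value inequality
    have hγ2S : ∀ k, γ2 k S = γs k (L k) := by
      intro k; simp only [hγ2def, hcS k]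
    have hval2 : ∀ k, f (γ2 k S) + c k * (∫ u in (0:ℝ)..S, myg g k (γ2 k u)) < f x - δ/2 := by
      intro k
      rw [hγ2S k]
      rcases eq_or_ne (c k) 0 with hck | hck
      · have hLk : L k = 0 := by
          have := hcS k; rw [hck, zero_mul] at this; exact this.symm
        have := hval k
        rw [hLk] at this
        simp only [intervalIntegral.integral_same] at this
        rw [hck, zero_mul]
        rw [hLk]
        simpa using this
      · have hcv := intervalIntegral.integral_comp_mul_left (a := 0) (b := S)
          (fun t => myg g k (γs k t)) hck
        rw [mul_zero, hcS k] at hcv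
        have : c k * (∫ u in (0:ℝ)..S, myg g k (γ2 k u))
            = ∫ t in (0:ℝ)..(L k), myg g k (γs k t) := by
          rw [hγ2def]
          simp only []
          rw [hcv, smul_eq_mul, ← mul_assoc, mul_inv_cancel₀ hck, one_mul]
        rw [this]
        exact hval k
    have hvalj : ∀ j k : ℕ, j ≤ k →
        f (γ2 k S) + c k * (∫ u in (0:ℝ)..S, myg g j (γ2 k u)) < f x - δ/2 := by
      intro j k hjk
      refine lt_of_le_of_lt ?_ (hval2 k)
      have hmono2 : (∫ u in (0:ℝ)..S, myg g j (γ2 k u)) ≤ ∫ u in (0:ℝ)..S, myg g k (γ2 k u) :=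
        intervalIntegral.integral_mono_on hS.le (hint2 j k) (hint2 k k)
          (fun u _ => hmygmono (γ2 k u) hjk)
      nlinarith [hc0 k]
    -- compactness extraction
    obtain ⟨cbar, hcbarmem, φ₁, hφ₁, hcconv⟩ :=
      (isCompact_Icc (a := (0:ℝ)) (b := 1)).tendsto_subseq (x := c) hc1
    obtain ⟨φ₂, γbar, hφ₂, hγbar0, hγbarconv⟩ :=
      curve_subseq hS.le x (fun k => γ2 (φ₁ k)) (fun k => hlip1 (φ₁ k)) (fun k => hγ20 (φ₁ k))
    set φ : ℕ → ℕ := φ₁ ∘ φ₂ with hφdef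
    have hφmono : StrictMono φ := hφ₁.comp hφ₂
    have hcφ : Tendsto (fun k => c (φ k)) atTop (𝓝 cbar) :=
      hcconv.comp (hφ₂.tendsto_atTop)
    have hγφconv : ∀ t ∈ Icc (0:ℝ) S, Tendsto (fun k => γ2 (φ k) t) atTop (𝓝 (γbar t)) :=
      fun t ht => hγbarconv t ht
    have hSmem : S ∈ Icc (0:ℝ) S := ⟨hS.le, le_refl _⟩
    -- Lipschitz property of the limit curve
    have hγbarlip : ∀ s ∈ Icc (0:ℝ) S, ∀ t ∈ Icc (0:ℝ) S,
        dist (γbar s) (γbar t) ≤ cbar * dist s t := by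
      intro s hs t ht
      refine le_of_tendsto_of_tendsto' ((hγφconv s hs).dist (hγφconv t ht))
        (hcφ.mul_const (dist s t)) (fun k => hlipc (φ k) s hs t ht)
    have hγbarcont : ContinuousOn γbar (Icc 0 S) := by
      have hl : LipschitzOnWith (Real.toNNReal cbar) γbar (Icc 0 S) := by
        rw [lipschitzOnWith_iff_dist_le_mul]
        intro s hs t ht
        refine (hγbarlip s hs t ht).trans ?_
        rw [Real.coe_toNNReal _ hcbarmem.1]
      exact hl.continuousOn
    -- limit of integrals for fixed j
    have hAj : ∀ j : ℕ, Tendsto (fun k => ∫ u in (0:ℝ)..S, myg g j (γ2 (φ k) u)) atTop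
        (𝓝 (∫ u in (0:ℝ)..S, myg g j (γbar u))) := by
      intro j
      refine intervalIntegral.tendsto_integral_filter_of_dominated_convergence
        (fun _ => M) ?_ ?_ intervalIntegrable_const ?_
      · exact Eventually.of_forall (fun k => by
          refine ContinuousOn.aestronglyMeasurable ?_ measurableSet_uIoc
          refine ((hmygcont j).comp_continuousOn ((hγ2cont (φ k)).mono ?_))
          rw [uIoc_of_le hS.le]
          exact Ioc_subset_Icc_self)
      · refine Eventually.of_forall (fun k => Eventually.of_forall (fun u hu => ?_))
        rw [Real.norm_eq_abs, abs_le]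
        have h1 := le_myg hgτ j (γ2 (φ k) u)
        have h2 := hmygM j (γ2 (φ k) u)
        constructor <;> nlinarith [hτ]
      · refine Eventually.of_forall (fun u hu => ?_)
        have humem : u ∈ Icc (0:ℝ) S := by
          rw [uIoc_of_le hS.le] at hu
          exact Ioc_subset_Icc_self hu
        exact ((hmygcont j).tendsto (γbar u)).comp (hγφconv u humem)
    -- limit inequality for fixed j
    have hlim1 : ∀ j : ℕ, f (γbar S) + cbar * (∫ u in (0:ℝ)..S, myg g j (γbar u))
        ≤ f x - δ/2 := by
      intro j
      refine le_of_tendsto (((hfc.tendsto (γbar S)).comp (hγφconv S hSmem)).add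
        (hcφ.mul (hAj j))) ?_
      filter_upwards [eventually_ge_atTop j] with k hk
      exact (hvalj j (φ k) (hk.trans (hφmono.le_apply))).le
    -- limit j → ∞
    have hA : Tendsto (fun j => ∫ u in (0:ℝ)..S, myg g j (γbar u)) atTop
        (𝓝 (∫ u in (0:ℝ)..S, g (γbar u))) := by
      refine intervalIntegral.tendsto_integral_filter_of_dominated_convergence
        (fun _ => M) ?_ ?_ intervalIntegrable_const ?_
      · refine Eventually.of_forall (fun j => ?_)
        refine ContinuousOn.aestronglyMeasurable ?_ measurableSet_uIoc
        refine (hmygcont j).comp_continuousOn (hγbarcont.mono ?_)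
        rw [uIoc_of_le hS.le]
        exact Ioc_subset_Icc_self
      · refine Eventually.of_forall (fun j => Eventually.of_forall (fun u hu => ?_))
        rw [Real.norm_eq_abs, abs_le]
        have h1 := le_myg hgτ j (γbar u)
        have h2 := hmygM j (γbar u)
        constructor <;> nlinarith [hτ]
      · refine Eventually.of_forall (fun u hu => ?_)
        exact myg_tendsto hgτ hgM hlsc (γbar u)
    have hlim2 : f (γbar S) + cbar * (∫ u in (0:ℝ)..S, g (γbar u)) ≤ f x - δ/2 := by
      refine le_of_tendsto (tendsto_const_nhds.add (tendsto_const_nhds.mul hA)) ?_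
      exact Eventually.of_forall hlim1
    -- final contradiction
    have hcbar0 : 0 ≤ cbar := hcbarmem.1
    rcases eq_or_lt_of_le hcbar0 with hc0' | hc0'
    · -- cbar = 0
      have : dist (γbar S) (γbar 0) ≤ 0 := by
        have := hγbarlip S hSmem 0 ⟨le_refl _, hS.le⟩
        rw [← hc0'] at this
        simpa using this
      have hSx : γbar S = x := by
        rw [← hγbar0]
        exact dist_le_zero.mp this
      rw [hSx, ← hc0'] at hlim2
      simp only [zero_mul, add_zero] at hlim2
      linarith
    · -- cbar > 0
      set Lb : ℝ := cbar * S with hLbdef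
      have hLb0 : 0 ≤ Lb := by positivity
      set η : ℝ → X := fun t => γbar (t / cbar) with hηdef
      have hηmaps : ∀ t ∈ Icc (0:ℝ) Lb, t / cbar ∈ Icc (0:ℝ) S := by
        intro t ht
        constructor
        · exact div_nonneg ht.1 hcbar0
        · rw [div_le_iff₀ hc0']
          calc t ≤ Lb := ht.2
            _ = S * cbar := by rw [hLbdef]; ring
      have hηlip : LipschitzOnWith 1 η (Icc 0 Lb) := by
        rw [lipschitzOnWith_iff_dist_le_mul]
        intro s hs t ht
        refine le_trans (hγbarlip _ (hηmaps s hs) _ (hηmaps t ht)) ?_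
        rw [Real.dist_eq, Real.dist_eq, div_sub_div_same, abs_div, abs_of_pos hc0']
        rw [NNReal.coe_one, one_mul, mul_div_cancel₀ _ (ne_of_gt hc0')]
      have hη0 : η 0 = x := by
        simp only [hηdef, zero_div]
        exact hγbar0
      have hηL : η Lb = γbar S := by
        simp only [hηdef, hLbdef]
        rw [mul_comm, mul_div_assoc, div_self (ne_of_gt hc0'), mul_one]
      have hug := hgug Lb hLb0 η hηlip
      rw [hη0, hηL] at hug
      have hcv : (∫ t in (0:ℝ)..Lb, g (η t)) = cbar * ∫ u in (0:ℝ)..S, g (γbar u) := by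
        have h5 := intervalIntegral.integral_comp_mul_left (a := 0) (b := Lb)
          (fun u => g (γbar u)) (c := cbar⁻¹) (inv_ne_zero (ne_of_gt hc0'))
        rw [mul_zero, inv_inv] at h5
        have h6 : cbar⁻¹ * Lb = S := by
          rw [hLbdef, ← mul_assoc, inv_mul_cancel₀ (ne_of_gt hc0'), one_mul]
        rw [h6] at h5
        have h7 : ∀ t, η t = γbar (cbar⁻¹ * t) := by
          intro t
          rw [hηdef]
          simp only []
          rw [div_eq_inv_mul]
        calc (∫ t in (0:ℝ)..Lb, g (η t)) = ∫ t in (0:ℝ)..Lb, g (γbar (cbar⁻¹ * t)) := by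
              refine intervalIntegral.integral_congr (fun t _ => by rw [h7])
          _ = cbar * ∫ u in (0:ℝ)..S, g (γbar u) := by rw [h5, smul_eq_mul]
      rw [hcv] at hug
      have habs : f x - f (γbar S) ≤ cbar * ∫ u in (0:ℝ)..S, g (γbar u) :=
        le_trans (le_abs_self _) hug
      linarith
  -- conclude
  have hsup : (⨆ k, pfv f (myg g k) x) = f x := by
    refine le_antisymm (ciSup_le hub) ?_
    by_contra hlt
    push_neg at hlt
    obtain ⟨k, hk⟩ := hkey (f x - ⨆ k, pfv f (myg g k) x) (by linarith)
    have := le_ciSup (f := fun k => pfv f (myg g k) x) ⟨f x, by rintro v ⟨j, rfl⟩; exact hub j⟩ k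
    simp only [sub_sub_cancel] at hk
    linarith
  rwa [hsup] at htend

end CONV

lemma tendstoL1loc_aux {X : Type u} [MetricSpace X] [Nonempty X] [MeasurableSpace X]
    [BorelSpace X] (μ : Measure X) (hfin : ∀ (x : X) (r : ℝ), μ (ball x r) < ⊤)
    (u : ℕ → X → ℝ) (v : X → ℝ)
    (hu : ∀ n, Measurable (u n)) (hv : Measurable v)
    (hbd : ∀ (x₀ : X) (R : ℝ), ∃ C : ℝ, ∀ n, ∀ x ∈ ball x₀ R, |u n x - v x| ≤ C)
    (hpt : ∀ x, Tendsto (fun n => u n x) atTop (𝓝 (v x))) :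
    TendstoL1loc μ u v Set.univ := by
  intro K hKc hKb _
  have x₀ : X := Classical.arbitrary X
  obtain ⟨R, hR⟩ := hKb.subset_ball x₀
  obtain ⟨C, hC⟩ := hbd x₀ R
  have hKmeas : MeasurableSet K := hKc.measurableSet
  have hres : ∀ᵐ x ∂(μ.restrict K), x ∈ K := ae_restrict_mem hKmeas
  have key := tendsto_lintegral_of_dominated_convergence
    (μ := μ.restrict K) (F := fun n x => ENNReal.ofReal |u n x - v x|)
    (f := fun _ => 0) (bound := fun _ => ENNReal.ofReal C)
    (fun n => ((hu n).sub hv).abs.ennreal_ofReal)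
    (fun n => by
      filter_upwards [hres] with x hx
      exact ENNReal.ofReal_le_ofReal (hC n x (hR hx)))
    (by
      rw [MeasureTheory.lintegral_const, Measure.restrict_apply_univ]
      exact ENNReal.mul_ne_top ENNReal.ofReal_ne_top
        (lt_of_le_of_lt (measure_mono hR) (hfin x₀ R)).ne)
    (Eventually.of_forall (fun x => by
      have h1 : Tendsto (fun n => u n x - v x) atTop (𝓝 0) := by
        have := (hpt x).sub (tendsto_const_nhds (x := v x))
        simpa using this
      have h2 : Tendsto (fun n => |u n x - v x|) atTop (𝓝 0) := by
        have := h1.abs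
        simpa using this
      have h3 := (ENNReal.continuous_ofReal.tendsto 0).comp h2
      simpa [Function.comp_def] using h3))
  simpa using key


end Aux

theorem statement16 {X : Type u} [MetricSpace X] [MeasurableSpace X] [BorelSpace X]
    (μ : Measure X) (Cd : ℝ≥0) (CP : ℝ) (hCd : 1 ≤ Cd) (hCP : 0 < CP)
    (hX : GoodSpace X μ Cd CP)
    (f : X → ℝ) (hf0 : ∀ x, 0 ≤ f x) (hfLip : ∃ L : ℝ≥0, LipschitzWith L f)
    (τ : ℝ) (hτ : 0 < τ) (g : X → ℝ) (hgτ : ∀ x, τ ≤ g x)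
    (hgbdd : ∃ M : ℝ, ∀ x, g x ≤ M)
    (hglsc : LowerSemicontinuous g)
    (hgcnt : (Set.range g).Countable)
    (hgloc : LocallyIntegrable g μ)
    (hgug : IsUpperGradientOf g f) :
    ∃ (fk : ℕ → X → ℝ) (gk : ℕ → X → ℝ),
      (∀ k, ∃ L : ℝ≥0, LipschitzWith L (fk k)) ∧
      TendstoL1loc μ fk f Set.univ ∧
      (∀ k, ∃ L : ℝ≥0, LipschitzWith L (gk k)) ∧
      (∀ k, ∃ M : ℝ, ∀ x, gk k x ≤ M) ∧
      (∀ k x, τ ≤ gk k x) ∧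
      (∀ k, IsUpperGradientOf (gk k) (fk k)) ∧
      (∀ k x, gk k x ≤ gk (k + 1) x) ∧
      (∀ k x, gk k x ≤ g x) ∧
      (∀ x, Tendsto (fun k => gk k x) atTop (𝓝 (g x))) ∧
      TendstoL1loc μ gk g Set.univ := by
  classical
  obtain ⟨hnt, hcomp, hgeo, hdub, hpoin⟩ := hX
  haveI : Nontrivial X := hnt
  haveI : CompleteSpace X := hcomp
  haveI : ProperSpace X := properSpace_of_doubling hdub
  obtain ⟨M, hgM⟩ := hgbdd
  obtain ⟨Lf, hfLip'⟩ := hfLip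
  have hfc : Continuous f := hfLip'.continuous
  have hM0 : 0 < M := lt_of_lt_of_le hτ ((hgτ (Classical.arbitrary X)).trans (hgM _))
  have hmyg0 : ∀ k : ℕ, ∀ y : X, 0 ≤ myg g k y := fun k y => le_trans hτ.le (le_myg hgτ k y)
  have hmygcont : ∀ k : ℕ, Continuous (myg g k) := fun k => (myg_lip hgτ k).continuous
  have hmygM : ∀ k : ℕ, ∀ y : X, myg g k y ≤ M := fun k y => (myg_le hgτ k y).trans (hgM y)
  have hfklip : ∀ k : ℕ, LipschitzWith M.toNNReal (pfv f (myg g k)) :=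
    fun k => pfv_lipschitz hgeo hf0 (hmyg0 k) (hmygcont k) hM0.le (hmygM k)
  refine ⟨fun k => pfv f (myg g k), fun k => myg g k, ?_, ?_, ?_, ?_, ?_, ?_, ?_, ?_, ?_, ?_⟩
  · exact fun k => ⟨M.toNNReal, hfklip k⟩
  · refine tendstoL1loc_aux μ (fun x r => hdub.lt_top x r) _ f
      (fun k => (hfklip k).continuous.measurable)
      hfc.measurable ?_ (fun x => pfv_tendsto hτ hf0 hfc hgτ hgM hglsc hgug x)
    intro x₀ R
    refine ⟨f x₀ + Lf * R, fun n x hx => ?_⟩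
    have h1 : pfv f (myg g n) x ≤ f x := pfv_le_f hf0 (hmyg0 n) x
    have h2 : 0 ≤ pfv f (myg g n) x := pfv_nonneg hf0 (hmyg0 n) x
    have h3 : f x - f x₀ ≤ Lf * dist x x₀ := by
      have hd := hfLip'.dist_le_mul x x₀
      rw [Real.dist_eq] at hd
      exact le_trans (le_abs_self _) hd
    have h4 : (Lf:ℝ) * dist x x₀ ≤ Lf * R :=
      mul_le_mul_of_nonneg_left (le_of_lt (mem_ball.mp hx)) Lf.coe_nonneg
    rw [abs_sub_comm, abs_of_nonneg (by linarith)]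
    linarith
  · exact fun k => ⟨k, myg_lip hgτ k⟩
  · exact fun k => ⟨M, fun x => hmygM k x⟩
  · exact fun k x => le_myg hgτ k x
  · exact fun k => pfv_isUpperGradient hf0 (hmyg0 k) (hmygcont k)
  · exact fun k x => myg_mono hgτ k x
  · exact fun k x => myg_le hgτ k x
  · exact fun x => myg_tendsto hgτ hgM hglsc x
  · refine tendstoL1loc_aux μ (fun x r => hdub.lt_top x r) _ g
      (fun k => (hmygcont k).measurable) hglsc.measurable ?_
      (fun x => myg_tendsto hgτ hgM hglsc x)
    intro x₀ R
    refine ⟨M, fun n x _ => ?_⟩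
    have h1 := myg_le hgτ n x
    have h2 := le_myg hgτ n x
    have h3 := hgM x
    rw [abs_le]
    constructor <;> linarith

end
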